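/- Let k be an algebraically closed field of characteristic 0 and α ∈ k with α(1−α²) ≠ 0. Consider the curve in P³ (coordinates M₁₂, M₁₃, M₂₄, M₃₄) cut out by f₂ = M₁₂M₃₄ − M₁₃M₂₄ and g₂ = M₁₂² + 2M₂₄² + αM₃₄². The point ε₂ = (0,1,0,0) is the unique point of V(f₂, g₂) at which the 2×4 Jacobian of (f₂, g₂) has rank less than 2. -/

import Mathlib

theorem stmt_5 (k : Type*) [Field k] [IsAlgClosed k] [CharZero k]
    (α : k) (hα : α * (1 - α ^ 2) ≠ 0)
    (M12 M13 M24 M34 : k) (hne : ¬(M12 = 0 ∧ M13 = 0 ∧ M24 = 0 ∧ M34 = 0))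
    (hf : M12 * M34 - M13 * M24 = 0)
    (hg : M12 ^ 2 + 2 * M24 ^ 2 + α * M34 ^ 2 = 0) :
    Matrix.rank !![M34, -M24, -M13, M12;
                   2 * M12, 0, 4 * M24, 2 * α * M34] < 2 ↔
      ∃ c : k, c ≠ 0 ∧ M12 = 0 ∧ M13 = c ∧ M24 = 0 ∧ M34 = 0 := by
  have hα0 : α ≠ 0 := fun h => hα (by rw [h, zero_mul])
  set A : Matrix (Fin 2) (Fin 4) k :=
    !![M34, -M24, -M13, M12; 2 * M12, 0, 4 * M24, 2 * α * M34] with hA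
  constructor
  · intro hrank
    have hnli : ¬ LinearIndependent k A := by
      intro hli
      have := LinearIndependent.rank_matrix (M := A) hli
      simp [Fintype.card_fin] at this
      omega
    obtain ⟨g, hsum, i, hi⟩ := Fintype.not_linearIndependent_iff.mp hnli
    set a := g 0 with ha
    set b := g 1 with hb
    have e0 : a * M34 + b * (2 * M12) = 0 := by
      have := congrFun hsum 0; simpa [Fin.sum_univ_two, hA] using this
    have e1 : a = 0 ∨ M24 = 0 := by
      have := congrFun hsum 1
      simpa [Fin.sum_univ_two, hA] using this
    have e2 : a * M13 - b * (4 * M24) = 0 := by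
      have := congrFun hsum 2
      simp [Fin.sum_univ_two, hA] at this
      linear_combination -this
    have e3 : a * M12 + b * (2 * α * M34) = 0 := by
      have := congrFun hsum 3; simpa [Fin.sum_univ_two, hA] using this
    by_cases haz : a = 0
    · have hbz : b ≠ 0 := by fin_cases i <;> simp_all
      rw [haz] at e0 e2 e3
      have h12 : M12 = 0 := by
        have h : b * (2 * M12) = 0 := by linear_combination e0
        rcases mul_eq_zero.mp h with h | h
        · exact absurd h hbz
        · rcases mul_eq_zero.mp h with h | h
          · exact absurd h two_ne_zero
          · exact h
      have h24 : M24 = 0 := by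
        have h : b * (4 * M24) = 0 := by linear_combination -e2
        rcases mul_eq_zero.mp h with h | h
        · exact absurd h hbz
        · rcases mul_eq_zero.mp h with h | h
          · norm_num at h
          · exact h
      have h34 : M34 = 0 := by
        have h : b * (2 * α * M34) = 0 := by linear_combination e3
        rcases mul_eq_zero.mp h with h | h
        · exact absurd h hbz
        · rcases mul_eq_zero.mp h with h | h
          · rcases mul_eq_zero.mp h with h | h
            · norm_num at h
            · exact absurd h hα0
          · exact h
      have h13 : M13 ≠ 0 := fun h => hne ⟨h12, h, h24, h34⟩
      exact ⟨M13, h13, h12, rfl, h24, h34⟩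
    · exfalso
      have h24 : M24 = 0 := e1.resolve_left haz
      have h13 : M13 = 0 := by
        have h : a * M13 = 0 := by linear_combination e2 + 4 * b * h24
        rcases mul_eq_zero.mp h with h | h
        · exact absurd h haz
        · exact h
      have hgg : M12 ^ 2 + α * M34 ^ 2 = 0 := by
        linear_combination hg - 2 * M24 * h24
      have h3 : M12 * (a ^ 2 - 4 * α * b ^ 2) = 0 := by
        linear_combination a * e3 - 2 * α * b * e0
      have h12 : M12 = 0 := by
        rcases mul_eq_zero.mp h3 with h | h
        · exact h
        · have hb : b ≠ 0 := by
            intro hbz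
            rw [hbz] at h
            apply haz
            have : a ^ 2 = 0 := by linear_combination h
            exact pow_eq_zero_iff two_ne_zero |>.mp this
          have h8 : M12 ^ 2 * (8 * α * b ^ 2) = 0 := by
            linear_combination a ^ 2 * hgg - α * (a * M34 - 2 * b * M12) * e0 - M12 ^ 2 * h
          rcases mul_eq_zero.mp h8 with h' | h'
          · exact pow_eq_zero_iff two_ne_zero |>.mp h'
          · exfalso
            rcases mul_eq_zero.mp h' with h'' | h''
            · rcases mul_eq_zero.mp h'' with h''' | h'''
              · norm_num at h'''
              · exact hα0 h'''
            · exact hb (pow_eq_zero_iff two_ne_zero |>.mp h'')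
      have h34 : M34 = 0 := by
        have hα34 : α * M34 ^ 2 = 0 := by linear_combination hgg - M12 * h12
        rcases mul_eq_zero.mp hα34 with h | h
        · exact absurd h hα0
        · exact pow_eq_zero_iff two_ne_zero |>.mp h
      exact hne ⟨h12, h13, h24, h34⟩
  · rintro ⟨c, hc, h12, h13, h24, h34⟩
    subst h12; subst h13; subst h24; subst h34
    have hrow : A.rank = 1 := by
      rw [Matrix.rank_eq_finrank_span_row]
      have hrange : Set.range A = {A 0, A 1} := by
        ext v; constructor
        · rintro ⟨i, rfl⟩; fin_cases i <;> simp
        · rintro (rfl | rfl) <;> [exact ⟨0, rfl⟩; exact ⟨1, rfl⟩]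
      have hA1 : A 1 = 0 := by
        ext j; fin_cases j <;> simp [hA]
      rw [show Set.range A.row = Set.range A from rfl, hrange, hA1]
      rw [show ({A 0, (0:Fin 4 → k)} : Set (Fin 4 → k)) = insert (0:Fin 4 → k) {A 0} by
        ext x; simp [or_comm]]
      rw [Submodule.span_insert_eq_span (Submodule.zero_mem _)]
      apply finrank_span_singleton
      intro h
      apply hc
      have h1 : A 0 2 = 0 := congrFun h 2
      rw [hA] at h1
      simpa using h1
    omega
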